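/- Let f : ℕ → [0,∞) be a function such that for all r, s ∈ ℕ with f(r) > 0 one has f(r+s) ≥ f(s). Fix a real number k > 0 and define g : ℕ → [0,∞] by g(r) := limsup_{m→∞} f(mr)/m^k. Then for all positive integers c and r one has g(cr) = c^k · g(r). -/

import Mathlib

open Filter
open scoped NNReal ENNReal

lemma aux_limsup_comp_le (v : ℕ → ℝ≥0∞) (u : ℕ → ℕ)
    (hu : Tendsto u atTop atTop) :
    limsup (fun n => v (u n)) atTop ≤ limsup v atTop := by
  rw [show (fun n => v (u n)) = v ∘ u from rfl, Filter.limsup_comp]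
  exact limsup_le_limsup_of_le hu

lemma aux_ptwise (X : ℝ≥0∞) (m c : ℕ) (k : ℝ) (hk : 0 < k) (hc : 0 < c) :
    X / (m : ℝ≥0∞) ^ k = (c : ℝ≥0∞) ^ k * (X / ((m * c : ℕ) : ℝ≥0∞) ^ k) := by
  have ht0 : ((c : ℝ≥0∞)) ^ k ≠ 0 :=
    (ENNReal.rpow_pos (by exact_mod_cast hc) (by simp)).ne'
  have htop : ((c : ℝ≥0∞)) ^ k ≠ ⊤ := ENNReal.rpow_ne_top_of_nonneg hk.le (by simp)
  rw [Nat.cast_mul, ENNReal.mul_rpow_of_nonneg _ _ hk.le]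
  rw [div_eq_mul_inv, div_eq_mul_inv, ENNReal.mul_inv (Or.inr htop) (Or.inr ht0)]
  rw [show (c:ℝ≥0∞)^k * (X * (((m:ℝ≥0∞)^k)⁻¹*(((c:ℝ≥0∞))^k)⁻¹))
      = ((c:ℝ≥0∞)^k * (((c:ℝ≥0∞))^k)⁻¹) * (X * ((m:ℝ≥0∞)^k)⁻¹) by ring,
    ENNReal.mul_inv_cancel ht0 htop, one_mul]

lemma aux_div_le {X A E n : ℝ≥0∞} (hE0 : E ≠ 0) (hEt : E ≠ ⊤) (hA : A ≤ E * n) :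
    X / n ≤ E * (X / A) := by
  have h1 : (E * n)⁻¹ ≤ A⁻¹ := ENNReal.inv_le_inv.2 hA
  calc X / n = (E * E⁻¹) * (X * n⁻¹) := by
        rw [ENNReal.mul_inv_cancel hE0 hEt, one_mul, div_eq_mul_inv]
    _ = E * (X * (E⁻¹ * n⁻¹)) := by ring
    _ = E * (X * (E * n)⁻¹) := by rw [ENNReal.mul_inv (Or.inl hE0) (Or.inl hEt)]
    _ ≤ E * (X * A⁻¹) := by exact mul_le_mul_right (mul_le_mul_right h1 X) E
    _ = E * (X / A) := by rw [div_eq_mul_inv]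

lemma aux_exists_bound (f : ℕ → ℝ≥0) (r c : ℕ) (hc : 2 ≤ c)
    (hstep : ∀ s n : ℕ, 0 < f (s*r) → f (n*r) ≤ f ((s+n)*r)) :
    ∃ B : ℕ, ∀ n : ℕ, 1 ≤ n → ∃ m, n ≤ m * c ∧ m * c ≤ n + B ∧ f (n*r) ≤ f ((m*c)*r) := by
  classical
  have hmulP : ∀ s : ℕ, 0 < f (s*r) → ∀ j : ℕ, 1 ≤ j → 0 < f ((j*s)*r) := by
    intro s hs j hj
    induction j with
    | zero => omega
    | succ j ih =>
      rcases Nat.eq_or_lt_of_le hj with h1 | h2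
      · simpa [← h1] using hs
      · have hj1 : 1 ≤ j := by omega
        have h3 := hstep s (j*s) hs
        rw [show s + j*s = (j+1)*s by ring] at h3
        exact lt_of_lt_of_le (ih hj1) h3
  set Q : ℕ → Prop := fun i => ∃ n, 1 ≤ n ∧ 0 < f (n*r) ∧ n % c = i with hQdef
  let sfn : ℕ → ℕ := fun i => if h : Q i then (c-1) * h.choose else 0
  refine ⟨c + (Finset.range c).sup sfn, ?_⟩
  intro n hn
  by_cases h0 : 0 < f (n*r)
  · have hQ : Q (n % c) := ⟨n, hn, h0, rfl⟩
    obtain ⟨hw1, hwpos, hwmod⟩ := hQ.choose_spec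
    set w := hQ.choose with hw
    have hsi : sfn (n % c) = (c-1) * w := by simp [sfn, dif_pos hQ]; exact Or.inl rfl
    have hspos : 0 < f ((sfn (n % c)) * r) := by
      rw [hsi]; exact hmulP w hwpos (c-1) (by omega)
    haveI : NeZero c := ⟨by omega⟩
    have hdvd : c ∣ (n + sfn (n % c)) := by
      rw [hsi]
      have hz : ((n + (c-1) * w : ℕ) : ZMod c) = 0 := by
        push_cast [Nat.cast_sub (by omega : 1 ≤ c)]
        have hnw : ((n : ZMod c)) = (w : ZMod c) := by
          rw [ZMod.natCast_eq_natCast_iff']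
          omega
        rw [hnw, ZMod.natCast_self]
        ring
      exact (ZMod.natCast_eq_zero_iff _ _).mp hz
    have hsup : sfn (n % c) ≤ (Finset.range c).sup sfn :=
      Finset.le_sup (Finset.mem_range.mpr (Nat.mod_lt n (by omega)))
    refine ⟨(n + sfn (n % c))/c, ?_, ?_, ?_⟩
    · rw [Nat.div_mul_cancel hdvd]; omega
    · rw [Nat.div_mul_cancel hdvd]; omega
    · rw [Nat.div_mul_cancel hdvd, add_comm n]
      exact hstep _ n hspos
  · have hf0 : f (n*r) = 0 := by simpa using h0
    have h1 : (n/c+1)*c = n/c*c + c := by ring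
    have h2 : n/c*c ≤ n := Nat.div_mul_le_self n c
    have h3 : c * (n/c) + n % c = n := Nat.div_add_mod n c
    have h4 : c * (n/c) = n/c*c := by ring
    have h5 : n % c < c := Nat.mod_lt n (by omega)
    exact ⟨n/c + 1, by omega, by omega, by rw [hf0]; exact zero_le⟩

theorem limsup_homogeneity
    (f : ℕ → ℝ≥0) (hf : ∀ r s : ℕ, 0 < f r → f s ≤ f (r + s))
    (k : ℝ) (hk : 0 < k)
    (g : ℕ → ℝ≥0∞)
    (hg : ∀ r : ℕ, g r =
      Filter.limsup (fun m : ℕ => (f (m * r) : ℝ≥0∞) / (m : ℝ≥0∞) ^ k) Filter.atTop)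
    (c r : ℕ) (hc : 0 < c) (hr : 0 < r) :
    g (c * r) = (c : ℝ≥0∞) ^ k * g r := by
  classical
  by_cases hc1 : c = 1
  · subst hc1
    simp [one_mul, ENNReal.one_rpow]
  have hc2 : 2 ≤ c := by omega
  set a : ℕ → ℝ≥0∞ := fun n => (f (n*r) : ℝ≥0∞) / (n:ℝ≥0∞)^k with ha
  have hgr : g r = limsup a atTop := hg r
  set M := limsup (fun m => a (m*c)) atTop with hM
  have hcktop : ((c:ℝ≥0∞))^k ≠ ⊤ := ENNReal.rpow_ne_top_of_nonneg hk.le (by simp)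
  have hgcr : g (c*r) = (c:ℝ≥0∞)^k * M := by
    rw [hg (c*r)]
    have heq : (fun m : ℕ => (f (m*(c*r)) : ℝ≥0∞) / (m:ℝ≥0∞)^k)
        = fun m => (c:ℝ≥0∞)^k * a (m*c) := by
      funext m
      rw [show m*(c*r) = (m*c)*r by ring]
      exact aux_ptwise _ m c k hk (by omega)
    rw [heq, ENNReal.limsup_const_mul_of_ne_top hcktop]
  have hMle : M ≤ limsup a atTop := by
    apply aux_limsup_comp_le
    exact tendsto_atTop_atTop.2 fun b => ⟨b, fun n hn => hn.trans (Nat.le_mul_of_pos_right n hc)⟩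
  have hstep : ∀ s n : ℕ, 0 < f (s*r) → f (n*r) ≤ f ((s+n)*r) := by
    intro s n hs
    have := hf (s*r) (n*r) hs
    rwa [← add_mul] at this
  obtain ⟨B, hB⟩ := aux_exists_bound f r c hc2 hstep
  let φ : ℕ → ℕ := fun n => if h : 1 ≤ n then (hB n h).choose else 1
  have hφ : ∀ n, 1 ≤ n → n ≤ φ n * c ∧ φ n * c ≤ n + B ∧ f (n*r) ≤ f ((φ n * c)*r) := by
    intro n h
    simp only [φ, dif_pos h]
    exact (hB n h).choose_spec
  have hφtop : Tendsto φ atTop atTop := by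
    apply tendsto_atTop_atTop.2
    intro b
    refine ⟨b * c + 1, fun n hn => ?_⟩
    have h1 := (hφ n (by omega)).1
    by_contra hlt
    push_neg at hlt
    have : φ n * c ≤ b * c := Nat.mul_le_mul_right c (by omega)
    omega
  have hkey : limsup a atTop ≤ M := by
    have hεstep : ∀ ε : ℝ≥0∞, 1 < ε → ε ≠ ⊤ → limsup a atTop ≤ ε^k * M := by
      intro ε hε1 hεtop
      by_cases hzero : ∀ᶠ n in atTop, f (n*r) = 0
      · have hev : ∀ᶠ n in atTop, a n ≤ 0 :=
          hzero.mono fun n hn => by simp [ha, hn]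
        exact (limsup_le_of_le (by isBoundedDefault) hev).trans zero_le
      · have hεk0 : ε^k ≠ 0 := (ENNReal.rpow_pos (lt_trans zero_lt_one hε1) hεtop).ne'
        have hεktop : ε^k ≠ ⊤ := ENNReal.rpow_ne_top_of_nonneg hk.le hεtop
        set δ := ε - 1 with hδ
        have hδ0 : δ ≠ 0 := by
          simp only [hδ, ne_eq, tsub_eq_zero_iff_le, not_le]
          exact hε1
        have hδε : 1 + δ = ε := by
          rw [hδ, add_comm, tsub_add_cancel_of_le hε1.le]
        have hBδtop : (B:ℝ≥0∞)/δ ≠ ⊤ := (ENNReal.div_lt_top (by simp) hδ0).ne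
        obtain ⟨N, hN⟩ := ENNReal.exists_nat_gt hBδtop
        have hN' : (B:ℝ≥0∞)/δ ≤ ((N+1 : ℕ) : ℝ≥0∞) := by
          refine hN.le.trans ?_
          exact_mod_cast Nat.cast_le.2 (Nat.le_succ N)
        have hBN : (B:ℝ≥0∞) ≤ ((N+1:ℕ):ℝ≥0∞) * δ :=
          (ENNReal.div_le_iff_le_mul (Or.inl hδ0)
            (Or.inr (by exact_mod_cast Nat.succ_ne_zero N))).mp hN'
        have hev : ∀ᶠ n in atTop, a n ≤ ε^k * a (φ n * c) := by
          filter_upwards [eventually_ge_atTop (max 1 (N+1))] with n hn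
          have hn1 : 1 ≤ n := le_trans (le_max_left _ _) hn
          have hnN : N+1 ≤ n := le_trans (le_max_right _ _) hn
          obtain ⟨h1, h2, h3⟩ := hφ n hn1
          have hcast : ((φ n * c : ℕ) : ℝ≥0∞) ≤ ε * (n:ℝ≥0∞) := by
            calc ((φ n * c : ℕ) : ℝ≥0∞) ≤ ((n + B : ℕ) : ℝ≥0∞) := by exact_mod_cast h2
              _ = (n:ℝ≥0∞) + B := by push_cast; ring
              _ ≤ (n:ℝ≥0∞) + ((N+1:ℕ):ℝ≥0∞) * δ := add_le_add_right hBN _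
              _ ≤ (n:ℝ≥0∞) + (n:ℝ≥0∞) * δ := by
                  refine add_le_add_right (mul_le_mul_left ?_ δ) _
                  exact_mod_cast hnN
              _ = (1 + δ) * n := by ring
              _ = ε * n := by rw [hδε]
          have hpow : ((φ n * c : ℕ) : ℝ≥0∞)^k ≤ ε^k * (n:ℝ≥0∞)^k := by
            calc ((φ n * c : ℕ) : ℝ≥0∞)^k ≤ (ε * n)^k := ENNReal.rpow_le_rpow hcast hk.le
              _ = ε^k * (n:ℝ≥0∞)^k := ENNReal.mul_rpow_of_nonneg _ _ hk.le
          calc a n = (f (n*r) : ℝ≥0∞) / (n:ℝ≥0∞)^k := rfl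
            _ ≤ (f ((φ n * c)*r) : ℝ≥0∞) / (n:ℝ≥0∞)^k :=
                ENNReal.div_le_div_right (by exact_mod_cast h3) _
            _ ≤ ε^k * ((f ((φ n * c)*r) : ℝ≥0∞) / ((φ n * c : ℕ):ℝ≥0∞)^k) :=
                aux_div_le hεk0 hεktop hpow
            _ = ε^k * a (φ n * c) := rfl
        calc limsup a atTop ≤ limsup (fun n => ε^k * a (φ n * c)) atTop :=
              limsup_le_limsup hev
          _ = ε^k * limsup (fun n => a (φ n * c)) atTop :=
              ENNReal.limsup_const_mul_of_ne_top hεktop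
          _ ≤ ε^k * M := mul_le_mul_right (aux_limsup_comp_le (fun m => a (m*c)) φ hφtop) _
    rcases eq_or_ne M ⊤ with h | h
    · exact h ▸ le_top
    apply ENNReal.le_of_forall_pos_le_add
    intro η hη _
    by_cases hM0 : M = 0
    · have h2 := hεstep 2 (by norm_num) (by norm_num)
      rw [hM0, mul_zero] at h2
      exact h2.trans zero_le
    · have hηtop : ((η:ℝ≥0∞)) ≠ 0 := by exact_mod_cast hη.ne'
      have hMη_top : M + η ≠ ⊤ := by
        rw [ENNReal.add_ne_top]
        exact ⟨h, ENNReal.coe_ne_top⟩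
      have hdiv_top : (M + η)/M ≠ ⊤ := (ENNReal.div_lt_top hMη_top hM0).ne
      have hdiv_one : 1 < (M + η)/M := by
        rw [ENNReal.lt_div_iff_mul_lt (Or.inl hM0) (Or.inl h), one_mul]
        exact ENNReal.lt_add_right h hηtop
      have hε1 : 1 < ((M + η)/M) ^ (1/k : ℝ) :=
        ENNReal.one_lt_rpow hdiv_one (by positivity)
      have hεtop : ((M + η)/M) ^ (1/k : ℝ) ≠ ⊤ :=
        ENNReal.rpow_ne_top_of_nonneg (by positivity) hdiv_top
      have hεk : (((M + η)/M) ^ (1/k : ℝ)) ^ k = (M + η)/M := by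
        rw [← ENNReal.rpow_mul, one_div_mul_cancel hk.ne', ENNReal.rpow_one]
      have hfin := hεstep _ hε1 hεtop
      rwa [hεk, ENNReal.div_mul_cancel hM0 h] at hfin
  have hMeq : limsup a atTop = M := le_antisymm hkey hMle
  rw [hgcr, hgr, hMeq]
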